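/- There exist universal constants c₁, c₂ > 0 (independent of d, P and f) such that for every dimension d ≥ 1, every finite nonempty set P ⊆ ℝ^d and every opening cost f > 0, c₁ · OPT(P, f) ≤ ∑_{p ∈ P} r_p ≤ c₂ · OPT(P, f). -/

import Mathlib

open Finset Metric

section MP

variable {α : Type*} [MetricSpace α] [DecidableEq α]

private lemma le_infDist_aux {s : Set α} (hs : s.Nonempty) {x : α} {b : ℝ}
    (h : ∀ y ∈ s, b ≤ dist x y) : b ≤ Metric.infDist x s := by
  by_contra hc
  push_neg at hc
  obtain ⟨y, hy, hlt⟩ := (Metric.infDist_lt_iff hs).1 hc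
  exact absurd (h y hy) (not_le.2 hlt)

/-- Key monotonicity lemma: if the ball of radius `s` around `p` already has
value at least `f`, then `r p ≤ s`. -/
private lemma key_le {P : Finset α} {f : ℝ} {r : α → ℝ}
    (hr : ∀ p ∈ P, 0 < r p ∧ ∑ x ∈ P, max (r p - dist p x) 0 = f)
    {p : α} (hp : p ∈ P) {s : ℝ} (hs : 0 ≤ s)
    (h : f ≤ ∑ x ∈ P, max (s - dist p x) 0) : r p ≤ s := by
  classical
  by_contra hc
  push_neg at hc
  have hrp : 0 < r p := (hr p hp).1
  have e1 : max (s - dist p p) 0 + ∑ x ∈ P.erase p, max (s - dist p x) 0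
      = ∑ x ∈ P, max (s - dist p x) 0 :=
    Finset.add_sum_erase P (fun x => max (s - dist p x) 0) hp
  have e2 : max (r p - dist p p) 0 + ∑ x ∈ P.erase p, max (r p - dist p x) 0
      = ∑ x ∈ P, max (r p - dist p x) 0 :=
    Finset.add_sum_erase P (fun x => max (r p - dist p x) 0) hp
  have hterm : ∑ x ∈ P.erase p, max (s - dist p x) 0
      ≤ ∑ x ∈ P.erase p, max (r p - dist p x) 0 := by
    apply Finset.sum_le_sum
    intro x _
    exact max_le_max (by linarith) le_rfl
  have hps : max (s - dist p p) 0 = s := by simp [dist_self, hs]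
  have hpr : max (r p - dist p p) 0 = r p := by simp [dist_self, hrp.le]
  have := (hr p hp).2
  rw [← e2, hpr] at this
  rw [← e1, hps] at h
  linarith

/-- The radii are 1-Lipschitz. -/
private lemma r_lipschitz {P : Finset α} {f : ℝ} {r : α → ℝ}
    (hr : ∀ p ∈ P, 0 < r p ∧ ∑ x ∈ P, max (r p - dist p x) 0 = f)
    {p q : α} (hp : p ∈ P) (hq : q ∈ P) : r p ≤ r q + dist p q := by
  have hq0 : 0 < r q := (hr q hq).1
  apply key_le hr hp (by positivity)
  rw [← (hr q hq).2]
  apply Finset.sum_le_sum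
  intro x _
  refine max_le_max ?_ le_rfl
  have := dist_triangle p q x
  have := dist_triangle q p x
  rw [dist_comm q p] at this
  linarith [dist_triangle p q x]

/-- Upper bound: `∑ r ≤ 2 · cost` for every nonempty facility set. -/
private lemma sum_r_le {P : Finset α} (hP : P.Nonempty) {f : ℝ} (hf : 0 < f) {r : α → ℝ}
    (hr : ∀ p ∈ P, 0 < r p ∧ ∑ x ∈ P, max (r p - dist p x) 0 = f)
    (F : Finset α) (hF : F.Nonempty) :
    ∑ p ∈ P, r p ≤ 2 * (∑ p ∈ P, Metric.infDist p (F : Set α) + f * F.card) := by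
  classical
  have hFs : (F : Set α).Nonempty := Finset.coe_nonempty.2 hF
  -- nearest facility map
  have hsel : ∀ p : α, ∃ q ∈ F, ∀ x ∈ F, dist p q ≤ dist p x :=
    fun p => F.exists_min_image (dist p ·) hF
  choose n hn1 hn2 using hsel
  have hnd : ∀ p : α, dist p (n p) ≤ Metric.infDist p (F : Set α) := by
    intro p
    exact le_infDist_aux hFs (fun y hy => hn2 p y hy)
  -- fibers
  set C : α → Finset α := fun q => P.filter (fun x => n x = q) with hC
  set D : α → ℝ := fun q => ∑ x ∈ C q, dist x q with hD
  set m : α → ℝ := fun q => ((C q).card : ℝ) with hm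
  have hmem : ∀ p ∈ P, p ∈ C (n p) := by
    intro p hp; simp [hC, hp]
  have hmpos : ∀ p ∈ P, 0 < m (n p) := by
    intro p hp
    have : (C (n p)).Nonempty := ⟨p, hmem p hp⟩
    simpa [hm] using Finset.card_pos.2 this
  have hDnn : ∀ q, 0 ≤ D q := by
    intro q; exact Finset.sum_nonneg (fun x _ => dist_nonneg)
  -- pointwise bound
  have hpt : ∀ p ∈ P, r p ≤ dist p (n p) + (f + D (n p)) / m (n p) := by
    intro p hp
    have hm0 := hmpos p hp
    have hs : 0 ≤ dist p (n p) + (f + D (n p)) / m (n p) := by positivity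
    apply key_le hr hp hs
    have hsub : C (n p) ⊆ P := Finset.filter_subset _ _
    have hcc : (((C (n p)).card : ℝ)) * ((f + D (n p)) / m (n p)) = f + D (n p) := by
      have hmm : ((C (n p)).card : ℝ) = m (n p) := rfl
      rw [hmm, mul_comm, div_mul_cancel₀ _ hm0.ne']
    calc f = ∑ x ∈ C (n p), ((f + D (n p)) / m (n p) - dist x (n p)) := by
            rw [Finset.sum_sub_distrib, Finset.sum_const, nsmul_eq_mul, hcc]
            have : ∑ x ∈ C (n p), dist x (n p) = D (n p) := rfl
            rw [this]; ring
          _ ≤ ∑ x ∈ C (n p), max (dist p (n p) + (f + D (n p)) / m (n p) - dist p x) 0 := by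
            apply Finset.sum_le_sum
            intro x hx
            refine le_trans ?_ (le_max_left _ _)
            have h := dist_triangle p (n p) x
            rw [dist_comm (n p) x] at h
            linarith
          _ ≤ ∑ x ∈ P, max (dist p (n p) + (f + D (n p)) / m (n p) - dist p x) 0 := by
            apply Finset.sum_le_sum_of_subset_of_nonneg hsub
            intro i _ _; exact le_max_right _ _
  -- sum up
  have himg : ∀ p ∈ P, n p ∈ P.image n := fun p hp => Finset.mem_image_of_mem n hp
  have hfib : ∀ (g : α → ℝ), ∑ p ∈ P, g p = ∑ q ∈ P.image n, ∑ p ∈ C q, g p := by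
    intro g
    exact (Finset.sum_fiberwise_of_maps_to himg g).symm
  have h2 : ∑ p ∈ P, (f + D (n p)) / m (n p) = ∑ q ∈ P.image n, (f + D q) := by
    rw [hfib (fun p => (f + D (n p)) / m (n p))]
    apply Finset.sum_congr rfl
    intro q hq
    obtain ⟨p0, hp0, hp0q⟩ := Finset.mem_image.1 hq
    have hcne : (C q).Nonempty := ⟨p0, by simp [hC, hp0, hp0q]⟩
    have hmq : 0 < m q := by simpa [hm] using Finset.card_pos.2 hcne
    have hcongr : ∀ p ∈ C q, (f + D (n p)) / m (n p) = (f + D q) / m q := by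
      intro p hp
      have hnp : n p = q := (Finset.mem_filter.1 hp).2
      rw [hnp]
    rw [Finset.sum_congr rfl hcongr, Finset.sum_const, nsmul_eq_mul]
    have hmm : ((C q).card : ℝ) = m q := rfl
    rw [hmm, mul_comm, div_mul_cancel₀ _ hmq.ne']
  have h3 : ∑ q ∈ P.image n, D q = ∑ p ∈ P, dist p (n p) := by
    rw [hfib (fun p => dist p (n p))]
    apply Finset.sum_congr rfl
    intro q hq
    show ∑ x ∈ C q, dist x q = _
    apply Finset.sum_congr rfl
    intro p hp
    have hnp : n p = q := (Finset.mem_filter.1 hp).2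
    rw [hnp]
  have hcard : (P.image n).card ≤ F.card := by
    apply Finset.card_le_card
    intro q hq
    obtain ⟨p0, _, hp0q⟩ := Finset.mem_image.1 hq
    exact hp0q ▸ hn1 p0
  have hsum1 : ∑ p ∈ P, r p ≤ ∑ p ∈ P, dist p (n p) + ∑ p ∈ P, (f + D (n p)) / m (n p) := by
    rw [← Finset.sum_add_distrib]
    exact Finset.sum_le_sum hpt
  have hsum2 : ∑ q ∈ P.image n, (f + D q) = f * (P.image n).card + ∑ p ∈ P, dist p (n p) := by
    rw [Finset.sum_add_distrib, Finset.sum_const, nsmul_eq_mul, h3]; ring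
  have hdistle : ∑ p ∈ P, dist p (n p) ≤ ∑ p ∈ P, Metric.infDist p (F : Set α) :=
    Finset.sum_le_sum (fun p _ => hnd p)
  have hcard' : f * ((P.image n).card : ℝ) ≤ f * (F.card : ℝ) := by
    apply mul_le_mul_of_nonneg_left _ hf.le
    exact_mod_cast hcard
  calc ∑ p ∈ P, r p ≤ ∑ p ∈ P, dist p (n p) + (f * (P.image n).card + ∑ p ∈ P, dist p (n p)) := by
        rw [← hsum2, ← h2]; exact hsum1
    _ = 2 * ∑ p ∈ P, dist p (n p) + f * (P.image n).card := by ring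
    _ ≤ 2 * ∑ p ∈ P, Metric.infDist p (F : Set α) + 2 * (f * F.card) := by
        have : (0:ℝ) ≤ f * F.card := by positivity
        nlinarith
    _ = 2 * (∑ p ∈ P, Metric.infDist p (F : Set α) + f * F.card) := by ring

/-! ### Greedy construction for the lower bound -/

open Classical in
noncomputable def mpGreedy (r : α → ℝ) : List α → Finset α → Finset α
  | [], F => F
  | p :: l, F =>
    if ∀ x ∈ F, 2 * r p < dist p x then mpGreedy r l (insert p F)
    else mpGreedy r l F

private lemma mpGreedy_mono (r : α → ℝ) :
    ∀ (l : List α) (F : Finset α), F ⊆ mpGreedy r l F := by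
  intro l
  induction l with
  | nil => intro F; simp [mpGreedy]
  | cons p l ih =>
    intro F
    rw [mpGreedy]
    split_ifs with h
    · exact (Finset.subset_insert p F).trans (ih _)
    · exact ih _

private lemma mpGreedy_subset (r : α → ℝ) :
    ∀ (l : List α) (F : Finset α), ∀ x ∈ mpGreedy r l F, x ∈ F ∨ x ∈ l := by
  intro l
  induction l with
  | nil => intro F x hx; exact Or.inl (by simpa [mpGreedy] using hx)
  | cons p l ih =>
    intro F x hx
    rw [mpGreedy] at hx
    split_ifs at hx with h
    · rcases ih _ x hx with hx' | hx'
      · rcases Finset.mem_insert.1 hx' with rfl | hx''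
        · exact Or.inr (List.mem_cons_self)
        · exact Or.inl hx''
      · exact Or.inr (List.mem_cons_of_mem p hx')
    · rcases ih F x hx with hx' | hx'
      · exact Or.inl hx'
      · exact Or.inr (List.mem_cons_of_mem p hx')

private lemma mpGreedy_cover (r : α → ℝ) :
    ∀ (l : List α) (F : Finset α), (∀ p ∈ l, 0 ≤ r p) →
    ∀ p ∈ l, ∃ q ∈ mpGreedy r l F, dist p q ≤ 2 * r p := by
  intro l
  induction l with
  | nil => intro F _ p hp; simp at hp
  | cons a l ih =>
    intro F h0 p hp
    rw [mpGreedy]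
    rcases List.mem_cons.1 hp with rfl | hp
    · split_ifs with h
      · refine ⟨p, mpGreedy_mono r l _ (Finset.mem_insert_self p F), ?_⟩
        have hp0 := h0 p hp
        rw [dist_self]
        linarith
      · push_neg at h
        obtain ⟨x, hxF, hx⟩ := h
        exact ⟨x, mpGreedy_mono r l _ hxF, hx⟩
    · split_ifs with h
      · exact ih _ (fun q hq => h0 q (List.mem_cons_of_mem a hq)) p hp
      · exact ih _ (fun q hq => h0 q (List.mem_cons_of_mem a hq)) p hp

private lemma mpGreedy_sep (r : α → ℝ) :
    ∀ (l : List α) (F : Finset α),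
    l.Pairwise (fun a b => r a ≤ r b) →
    (∀ x ∈ F, ∀ p ∈ l, r x ≤ r p) →
    (∀ q ∈ F, ∀ q' ∈ F, q ≠ q' → r q + r q' < dist q q') →
    ∀ q ∈ mpGreedy r l F, ∀ q' ∈ mpGreedy r l F, q ≠ q' → r q + r q' < dist q q' := by
  intro l
  induction l with
  | nil => intro F _ _ hsep; simpa [mpGreedy] using hsep
  | cons p l ih =>
    intro F hsort hinv hsep
    have hsort' := (List.pairwise_cons.1 hsort).2
    have hple : ∀ b ∈ l, r p ≤ r b := (List.pairwise_cons.1 hsort).1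
    rw [mpGreedy]
    split_ifs with h
    · apply ih (insert p F) hsort'
      · intro x hx p' hp'
        rcases Finset.mem_insert.1 hx with rfl | hx
        · exact hple p' hp'
        · exact hinv x hx p' (List.mem_cons_of_mem p hp')
      · intro q hq0 q' hq0' hne
        rcases Finset.mem_insert.1 hq0 with rfl | hqF
        · rcases Finset.mem_insert.1 hq0' with rfl | hqF'
          · exact absurd rfl hne
          · have h1 := h q' hqF'
            have h2 : r q' ≤ r q := hinv q' hqF' q (List.mem_cons_self)
            linarith
        · rcases Finset.mem_insert.1 hq0' with rfl | hqF'
          · have h1 := h q hqF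
            have h2 : r q ≤ r q' := hinv q hqF q' (List.mem_cons_self)
            rw [dist_comm]
            linarith
          · exact hsep q hqF q' hqF' hne
    · apply ih F hsort'
      · intro x hx p' hp'
        exact hinv x hx p' (List.mem_cons_of_mem p hp')
      · exact hsep

/-- The greedy solution has cost at most `3 ∑ r`. -/
private lemma exists_good_F {P : Finset α} (hP : P.Nonempty) {f : ℝ} (hf : 0 < f) {r : α → ℝ}
    (hr : ∀ p ∈ P, 0 < r p ∧ ∑ x ∈ P, max (r p - dist p x) 0 = f) :
    ∃ F : Finset α, F.Nonempty ∧
      ∑ p ∈ P, Metric.infDist p (F : Set α) + f * F.card ≤ 3 * ∑ p ∈ P, r p := by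
  classical
  set R : α → α → Prop := fun a b => r a ≤ r b with hR
  letI : DecidableRel R := fun a b => Classical.dec _
  haveI : Std.Total R := ⟨fun a b => le_total _ _⟩
  haveI : IsTrans α R := ⟨fun a b c hab hbc => le_trans hab hbc⟩
  set l : List α := List.insertionSort R P.toList with hl
  have hsort : l.Pairwise R := List.pairwise_insertionSort R P.toList
  have hperm : l.Perm P.toList := List.perm_insertionSort R P.toList
  have hmeml : ∀ p, p ∈ l ↔ p ∈ P := by
    intro p
    rw [hperm.mem_iff, Finset.mem_toList]
  set F : Finset α := mpGreedy r l ∅ with hF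
  have hFP : F ⊆ P := by
    intro x hx
    rcases mpGreedy_subset r l ∅ x hx with hx' | hx'
    · simp at hx'
    · exact (hmeml x).1 hx'
  have hcover : ∀ p ∈ P, ∃ q ∈ F, dist p q ≤ 2 * r p := by
    intro p hp
    exact mpGreedy_cover r l ∅ (fun q hq => ((hr q ((hmeml q).1 hq)).1).le) p ((hmeml p).2 hp)
  have hFne : F.Nonempty := by
    obtain ⟨p0, hp0⟩ := hP
    obtain ⟨q, hq, _⟩ := hcover p0 hp0
    exact ⟨q, hq⟩
  have hsep : ∀ q ∈ F, ∀ q' ∈ F, q ≠ q' → r q + r q' < dist q q' :=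
    mpGreedy_sep r l ∅ hsort (by simp) (by simp)
  refine ⟨F, hFne, ?_⟩
  have hFs : (F : Set α).Nonempty := Finset.coe_nonempty.2 hFne
  -- connection cost
  have hconn : ∑ p ∈ P, Metric.infDist p (F : Set α) ≤ ∑ p ∈ P, 2 * r p := by
    apply Finset.sum_le_sum
    intro p hp
    obtain ⟨q, hq, hdq⟩ := hcover p hp
    exact (Metric.infDist_le_dist_of_mem (by exact_mod_cast hq)).trans hdq
  -- opening cost
  set B : α → Finset α := fun q => P.filter (fun x => dist q x ≤ r q) with hB
  have hopen1 : ∀ q ∈ F, f ≤ ∑ x ∈ B q, r x := by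
    intro q hq
    have hqP : q ∈ P := hFP hq
    rw [← (hr q hqP).2]
    rw [hB]
    rw [Finset.sum_filter]
    apply Finset.sum_le_sum
    intro x hx
    by_cases hd : dist q x ≤ r q
    · rw [if_pos hd]
      have hlip := r_lipschitz hr hqP hx
      have hx0 := (hr x hx).1
      apply max_le (by linarith) hx0.le
    · rw [if_neg hd]
      push_neg at hd
      apply max_le (by linarith) le_rfl
  have hdisj : (↑F : Set α).PairwiseDisjoint B := by
    intro q hq q' hq' hne
    simp only [Finset.disjoint_left]
    intro x hxq hxq'
    have h1 : dist q x ≤ r q := (Finset.mem_filter.1 hxq).2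
    have h2 : dist q' x ≤ r q' := (Finset.mem_filter.1 hxq').2
    have h3 := hsep q hq q' hq' hne
    have := dist_triangle q x q'
    rw [dist_comm x q'] at this
    linarith
  have hopen : f * F.card ≤ ∑ p ∈ P, r p := by
    calc f * F.card = ∑ q ∈ F, f := by rw [Finset.sum_const, nsmul_eq_mul]; ring
      _ ≤ ∑ q ∈ F, ∑ x ∈ B q, r x := Finset.sum_le_sum hopen1
      _ = ∑ x ∈ F.biUnion B, r x := (Finset.sum_biUnion hdisj).symm
      _ ≤ ∑ p ∈ P, r p := by
          apply Finset.sum_le_sum_of_subset_of_nonneg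
          · intro x hx
            obtain ⟨q, _, hxq⟩ := Finset.mem_biUnion.1 hx
            exact (Finset.mem_filter.1 hxq).1
          · intro x hx _; exact (hr x hx).1.le
  have : ∑ p ∈ P, 2 * r p = 2 * ∑ p ∈ P, r p := by rw [Finset.mul_sum]
  linarith [hconn, hopen]

end MP
/-- The Uniform Facility Location cost of opening the (nonempty, finite) set of
facilities `F` for the set of clients `P`: every client connects to its nearest
facility, and each facility costs `f` to open. -/
noncomputable def uflCost (d : ℕ) (f : ℝ)
    (P F : Finset (EuclideanSpace ℝ (Fin d))) : ℝ :=
  ∑ p ∈ P, Metric.infDist p (F : Set (EuclideanSpace ℝ (Fin d))) + f * F.card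

/-- The optimal Uniform Facility Location cost: the infimum of `uflCost` over
all nonempty finite facility sets `F ⊆ ℝ^d`. -/
noncomputable def uflOPT (d : ℕ) (f : ℝ)
    (P : Finset (EuclideanSpace ℝ (Fin d))) : ℝ :=
  sInf {c : ℝ | ∃ F : Finset (EuclideanSpace ℝ (Fin d)), F.Nonempty ∧ c = uflCost d f P F}

/-- There are universal constants `c₁, c₂ > 0` such that for
every dimension `d ≥ 1`, every finite nonempty `P ⊆ ℝ^d` and opening cost
`f > 0`, with `r p = r_p` the unique positive root of
`∑_{x ∈ P} max (r − dist p x) 0 = f`, one has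
`c₁ · OPT(P, f) ≤ ∑_{p ∈ P} r_p ≤ c₂ · OPT(P, f)`. -/
theorem stmt_3 :
    ∃ c₁ c₂ : ℝ, 0 < c₁ ∧ 0 < c₂ ∧
      ∀ (d : ℕ), 1 ≤ d →
      ∀ (P : Finset (EuclideanSpace ℝ (Fin d))), P.Nonempty →
      ∀ f : ℝ, 0 < f →
      ∀ r : EuclideanSpace ℝ (Fin d) → ℝ,
        (∀ p ∈ P, 0 < r p ∧ ∑ x ∈ P, max (r p - dist p x) 0 = f) →
        c₁ * uflOPT d f P ≤ ∑ p ∈ P, r p ∧ ∑ p ∈ P, r p ≤ c₂ * uflOPT d f P := by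
  classical
  refine ⟨1/3, 2, by norm_num, by norm_num, ?_⟩
  intro d _hd P hP f hf r hr
  set S : Set ℝ :=
    {c : ℝ | ∃ F : Finset (EuclideanSpace ℝ (Fin d)), F.Nonempty ∧ c = uflCost d f P F}
    with hS
  have hbdd : BddBelow S := by
    refine ⟨0, ?_⟩
    rintro c ⟨F, hFne, rfl⟩
    unfold uflCost
    have h1 : 0 ≤ ∑ p ∈ P, Metric.infDist p (F : Set (EuclideanSpace ℝ (Fin d))) :=
      Finset.sum_nonneg (fun p _ => Metric.infDist_nonneg)
    have h2 : (0:ℝ) ≤ f * F.card := by positivity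
    linarith
  obtain ⟨F₀, hF₀ne, hF₀le⟩ := exists_good_F hP hf hr
  have hOPTdef : uflOPT d f P = sInf S := rfl
  have hmem : uflCost d f P F₀ ∈ S := ⟨F₀, hF₀ne, rfl⟩
  have hOPT : uflOPT d f P ≤ 3 * ∑ p ∈ P, r p := by
    rw [hOPTdef]
    refine le_trans (csInf_le hbdd hmem) ?_
    exact hF₀le
  have hlow : ∑ p ∈ P, r p ≤ 2 * uflOPT d f P := by
    have : (∑ p ∈ P, r p) / 2 ≤ uflOPT d f P := by
      rw [hOPTdef]
      apply le_csInf ⟨uflCost d f P F₀, hmem⟩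
      rintro c ⟨F, hFne, rfl⟩
      have := sum_r_le hP hf hr F hFne
      unfold uflCost
      linarith
    linarith
  constructor
  · linarith
  · exact hlow
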